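/- arXiv:2509.11538 — 4 statements merged into one kernel-verified Lean document; each statement's English description precedes it below -/
import Mathlib

section
/- Let n ≥ 1 and let M be an n×n real matrix with nonnegative entries that is irreducible. Then the spectral radius ρ(M) is strictly positive, ρ(M) is an eigenvalue of M, and there exists a row vector p with all entries strictly positive such that p·M = ρ(M)·p (i.e., p is a positive left eigenvector of M associated with the eigenvalue ρ(M)). -/
open Matrix

/-- Spectral radius of a real square matrix: the supremum (here: maximum) of the
absolute values of its complex eigenvalues. -/
noncomputable def specRad {n : ℕ} (M : Matrix (Fin n) (Fin n) ℝ) : ℝ :=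
  sSup ((‖·‖ : ℂ → ℝ) '' spectrum ℂ (M.map (Complex.ofReal ·)))

/-- A nonnegative matrix is irreducible if for every pair of indices `(i, j)`
there is a positive power `k` with `(M ^ k) i j > 0`. -/
def MatIrreducible {n : ℕ} (M : Matrix (Fin n) (Fin n) ℝ) : Prop :=
  ∀ i j : Fin n, ∃ k : ℕ, 0 < k ∧ 0 < (M ^ k) i j

open Finset

section aux
variable {n : ℕ}

lemma PF_pow_entry_nonneg (M : Matrix (Fin n) (Fin n) ℝ) (hM : ∀ i j, 0 ≤ M i j) :
    ∀ k i j, 0 ≤ (M ^ k) i j := by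
  intro k
  induction k with
  | zero => intro i j; simp [Matrix.one_apply]; split <;> norm_num
  | succ k ih =>
    intro i j
    rw [pow_succ, Matrix.mul_apply]
    exact Finset.sum_nonneg fun l _ => mul_nonneg (ih i l) (hM l j)

/-- construction of a strictly positive matrix commuting with `M`. -/
lemma PF_exists_pos_comm (M : Matrix (Fin n) (Fin n) ℝ) (hM : ∀ i j, 0 ≤ M i j)
    (hirr : ∀ i j : Fin n, ∃ k : ℕ, 0 < k ∧ 0 < (M ^ k) i j) :
    ∃ N : Matrix (Fin n) (Fin n) ℝ, (∀ i j, 0 < N i j) ∧ M * N = N * M := by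
  classical
  set K : ℕ := (Finset.univ : Finset (Fin n × Fin n)).sup
    (fun p => (hirr p.1 p.2).choose) with hK
  refine ⟨∑ k ∈ Finset.range (K + 1), M ^ k, ?_, ?_⟩
  · intro i j
    have hk := (hirr i j).choose_spec
    have hmem : (hirr i j).choose ∈ Finset.range (K + 1) := by
      have : (hirr i j).choose ≤ K :=
        Finset.le_sup (f := fun p : Fin n × Fin n => (hirr p.1 p.2).choose)
          (Finset.mem_univ (i, j))
      simpa [Finset.mem_range, Nat.lt_succ_iff] using this
    have : (M ^ (hirr i j).choose) i j ≤ (∑ k ∈ Finset.range (K + 1), M ^ k) i j := by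
      rw [Matrix.sum_apply]
      exact Finset.single_le_sum (fun k _ => PF_pow_entry_nonneg M hM k i j) hmem
    exact lt_of_lt_of_le hk.2 this
  · rw [Finset.mul_sum, Finset.sum_mul]
    exact Finset.sum_congr rfl fun k _ => (Commute.refl M).pow_right k

end aux

section core
variable {n : ℕ}

lemma PF_vecMul_pos (N : Matrix (Fin n) (Fin n) ℝ) (hN : ∀ i j, 0 < N i j)
    (y : Fin n → ℝ) (hy : ∀ i, 0 ≤ y i) (hy0 : y ≠ 0) (j : Fin n) :
    0 < (y ᵥ* N) j := by
  obtain ⟨i₀, hi₀⟩ := Function.ne_iff.mp hy0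
  have hi₀' : 0 < y i₀ := lt_of_le_of_ne (hy i₀) (Ne.symm hi₀)
  have : (y ᵥ* N) j = ∑ i, y i * N i j := by simp [Matrix.vecMul, dotProduct]
  rw [this]
  exact Finset.sum_pos' (fun i _ => mul_nonneg (hy i) (hN i j).le)
    ⟨i₀, Finset.mem_univ _, mul_pos hi₀' (hN i₀ j)⟩

lemma PF_exists_pos_left_eigenvector (hn : 1 ≤ n) (M : Matrix (Fin n) (Fin n) ℝ)
    (hM : ∀ i j, 0 ≤ M i j)
    (hirr : ∀ i j : Fin n, ∃ k : ℕ, 0 < k ∧ 0 < (M ^ k) i j) :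
    ∃ (r : ℝ) (p : Fin n → ℝ), 0 < r ∧ (∀ i, 0 < p i) ∧ p ᵥ* M = r • p := by
  classical
  have : NeZero n := ⟨by omega⟩
  obtain ⟨N, hNpos, hNcomm⟩ := PF_exists_pos_comm M hM hirr
  -- the simplex
  set S : Set (Fin n → ℝ) := {x | (∀ i, 0 ≤ x i) ∧ ∑ i, x i = 1} with hS
  have hScompact : IsCompact S := by
    have hclosed : IsClosed S := by
      have h1 : IsClosed {x : Fin n → ℝ | ∀ i, 0 ≤ x i} := by
        have : {x : Fin n → ℝ | ∀ i, 0 ≤ x i} = ⋂ i, {x | 0 ≤ x i} := by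
          ext x; simp
        rw [this]
        exact isClosed_iInter fun i => isClosed_le continuous_const (continuous_apply i)
      have h2 : IsClosed {x : Fin n → ℝ | ∑ i, x i = 1} :=
        isClosed_eq (by continuity) continuous_const
      exact (h1.inter h2 : _)
    have hbdd : Bornology.IsBounded S := by
      rw [Metric.isBounded_iff_subset_closedBall 0]
      refine ⟨1, fun x hx => ?_⟩
      rw [Metric.mem_closedBall, dist_zero_right]
      rw [pi_norm_le_iff_of_nonneg (by norm_num)]
      intro i
      rw [Real.norm_eq_abs, abs_of_nonneg (hx.1 i)]
      calc x i ≤ ∑ j, x j := Finset.single_le_sum (fun j _ => hx.1 j) (Finset.mem_univ i)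
        _ = 1 := hx.2
    exact Metric.isCompact_of_isClosed_isBounded hclosed hbdd
  have hSne : S.Nonempty := by
    refine ⟨fun _ => (n : ℝ)⁻¹, fun i => by positivity, ?_⟩
    have : (∑ _i : Fin n, (n : ℝ)⁻¹) = n * (n : ℝ)⁻¹ := by
      rw [Finset.sum_const, Finset.card_univ, Fintype.card_fin, nsmul_eq_mul]
    rw [this, mul_inv_cancel₀ (by positivity : (n : ℝ) ≠ 0)]
  have hSne0 : ∀ x ∈ S, x ≠ 0 := by
    intro x hx h0
    have := hx.2
    rw [h0] at this
    simp at this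
  -- normalized multiplication by N
  set c : (Fin n → ℝ) → ℝ := fun x => ∑ j, (x ᵥ* N) j with hc
  have hcpos : ∀ x ∈ S, 0 < c x := fun x hx =>
    Finset.sum_pos (fun j _ => PF_vecMul_pos N hNpos x hx.1 (hSne0 x hx) j) Finset.univ_nonempty
  set g : (Fin n → ℝ) → (Fin n → ℝ) := fun x => (c x)⁻¹ • (x ᵥ* N) with hg
  have hgS : ∀ x ∈ S, g x ∈ S ∧ ∀ i, 0 < g x i := by
    intro x hx
    have hcx := hcpos x hx
    have hpos : ∀ i, 0 < g x i := fun i =>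
      mul_pos (inv_pos.mpr hcx) (PF_vecMul_pos N hNpos x hx.1 (hSne0 x hx) i)
    refine ⟨⟨fun i => (hpos i).le, ?_⟩, hpos⟩
    simp only [hg, Pi.smul_apply, smul_eq_mul, ← Finset.mul_sum]
    exact inv_mul_cancel₀ hcx.ne'
  have hvecMulCont : ∀ (A : Matrix (Fin n) (Fin n) ℝ), Continuous fun x : Fin n → ℝ => x ᵥ* A := by
    intro A
    refine continuous_pi fun j => ?_
    have : (fun x : Fin n → ℝ => (x ᵥ* A) j) = fun x => ∑ i, x i * A i j := by
      funext x; simp [Matrix.vecMul, dotProduct]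
    rw [this]
    exact continuous_finset_sum _ fun i _ => (continuous_apply i).mul continuous_const
  have hgCont : ContinuousOn g S := by
    refine ContinuousOn.smul (f := fun x => (c x)⁻¹) (g := fun x => x ᵥ* N) ?_ (hvecMulCont N).continuousOn
    exact ((continuous_finset_sum _ fun j _ => (continuous_pi_iff.mp (hvecMulCont N)) j).continuousOn).inv₀
      fun x hx => (hcpos x hx).ne'
  -- the compact set of positive candidates
  set Kset : Set (Fin n → ℝ) := g '' S with hKset
  have hKcompact : IsCompact Kset := hScompact.image_of_continuousOn hgCont
  have hKne : Kset.Nonempty := hSne.image g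
  have hKS : Kset ⊆ S := by rintro _ ⟨x, hx, rfl⟩; exact (hgS x hx).1
  have hKpos : ∀ q ∈ Kset, ∀ i, 0 < q i := by rintro _ ⟨x, hx, rfl⟩; exact (hgS x hx).2
  -- Collatz-Wielandt function
  set f : (Fin n → ℝ) → ℝ :=
    fun x => Finset.univ.inf' Finset.univ_nonempty (fun i => (x ᵥ* M) i / x i) with hf
  have hfCont : ContinuousOn f Kset := by
    intro x hx
    refine ContinuousWithinAt.finset_inf'_apply Finset.univ_nonempty fun i _ => ?_
    exact (((continuous_pi_iff.mp (hvecMulCont M)) i).continuousAt.div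
      (continuous_apply i).continuousAt (hKpos x hx i).ne').continuousWithinAt
  obtain ⟨p, hpK, hpmax⟩ := hKcompact.exists_isMaxOn hKne hfCont
  set r : ℝ := f p with hr
  have hppos : ∀ i, 0 < p i := hKpos p hpK
  have hple : ∀ i, r * p i ≤ (p ᵥ* M) i := by
    intro i
    have := Finset.inf'_le (fun i => (p ᵥ* M) i / p i) (Finset.mem_univ i)
    exact (le_div_iff₀ (hppos i)).mp this
  -- main claim: p ᵥ* M = r • p
  have hmain : p ᵥ* M = r • p := by
    by_contra hne
    set y : Fin n → ℝ := p ᵥ* M - r • p with hy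
    have hy0 : ∀ i, 0 ≤ y i := fun i => by
      simpa [hy, sub_nonneg] using hple i
    have hyne : y ≠ 0 := by
      intro h
      exact hne (by rwa [hy, sub_eq_zero] at h)
    -- q := g p improves f
    have hpS : p ∈ S := hKS hpK
    have hcp := hcpos p hpS
    set w : Fin n → ℝ := p ᵥ* N with hw
    have hz : ∀ j, 0 < (y ᵥ* N) j := PF_vecMul_pos N hNpos y hy0 hyne
    have hyN : y ᵥ* N = w ᵥ* M - r • w := by
      rw [hy, Matrix.sub_vecMul, Matrix.smul_vecMul, hw,
        Matrix.vecMul_vecMul, Matrix.vecMul_vecMul, hNcomm, ← Matrix.vecMul_vecMul]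
    have hgq : g p ∈ Kset := ⟨p, hpS, rfl⟩
    have hqM : ∀ i, r * g p i < (g p ᵥ* M) i := by
      intro i
      have h1 : (g p ᵥ* M) i - r * g p i = (c p)⁻¹ * (y ᵥ* N) i := by
        rw [hg]
        rw [Matrix.smul_vecMul]
        simp only [Pi.smul_apply, smul_eq_mul]
        rw [hyN]
        simp only [Pi.sub_apply, Pi.smul_apply, smul_eq_mul]
        ring
      have h2 : 0 < (c p)⁻¹ * (y ᵥ* N) i := mul_pos (inv_pos.mpr hcp) (hz i)
      linarith [h1 ▸ h2]
    have hfq : r < f (g p) := by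
      rw [hf, Finset.lt_inf'_iff]
      intro i _
      exact (lt_div_iff₀ (hKpos _ hgq i)).mpr (by simpa [mul_comm] using hqM i)
    exact absurd (hpmax hgq) (not_le.mpr hfq)
  -- positivity of r
  have hrpos : 0 < r := by
    have hMne : ∃ a b, 0 < M a b := by
      by_contra h
      push_neg at h
      have hM0 : M = 0 := by
        ext a b; exact le_antisymm (h a b) (hM a b)
      obtain ⟨i⟩ : Nonempty (Fin n) := inferInstance
      obtain ⟨k, hk, hk'⟩ := hirr i i
      rw [hM0, zero_pow hk.ne'] at hk'
      simp at hk'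
    obtain ⟨a, b, hab⟩ := hMne
    have h1 : 0 < (p ᵥ* M) b := by
      have : (p ᵥ* M) b = ∑ i, p i * M i b := by simp [Matrix.vecMul, dotProduct]
      rw [this]
      exact Finset.sum_pos' (fun i _ => mul_nonneg (hppos i).le (hM i b))
        ⟨a, Finset.mem_univ _, mul_pos (hppos a) hab⟩
    have h2 : (p ᵥ* M) b = r * p b := by rw [hmain]; simp
    nlinarith [hppos b]
  exact ⟨r, p, hrpos, hppos, hmain⟩

end core

section spec
variable {n : ℕ}

lemma PF_mem_spectrum_iff_det {F : Type*} [Field F] (A : Matrix (Fin n) (Fin n) F) (μ : F) :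
    μ ∈ spectrum F A ↔ (μ • (1 : Matrix (Fin n) (Fin n) F) - A).det = 0 := by
  rw [spectrum.mem_iff, Algebra.algebraMap_eq_smul_one]
  rw [← not_iff_not, not_not]
  rw [Matrix.isUnit_iff_isUnit_det, isUnit_iff_ne_zero]

lemma PF_vecMul_smul_one_sub (A : Matrix (Fin n) (Fin n) ℝ) (r : ℝ) (p : Fin n → ℝ) :
    p ᵥ* (r • (1 : Matrix (Fin n) (Fin n) ℝ) - A) = r • p - p ᵥ* A := by
  ext j
  simp only [Matrix.vecMul, dotProduct, Matrix.sub_apply, Matrix.smul_apply,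
    Matrix.one_apply, smul_eq_mul, Pi.sub_apply, Pi.smul_apply]
  simp only [mul_sub, Finset.sum_sub_distrib]
  congr 1
  simp [mul_ite, mul_comm]

end spec

section spec2
variable {n : ℕ}

lemma PF_map_smul_one_sub (A : Matrix (Fin n) (Fin n) ℝ) (r : ℝ) :
    (r • (1 : Matrix (Fin n) (Fin n) ℝ) - A).map (Complex.ofReal ·) =
      (r : ℂ) • (1 : Matrix (Fin n) (Fin n) ℂ) - A.map (Complex.ofReal ·) := by
  ext i j
  simp only [Matrix.map_apply, Matrix.sub_apply, Matrix.smul_apply, Matrix.one_apply,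
    smul_eq_mul]
  push_cast
  split <;> simp

lemma PF_smul_one_sub_mulVec (B : Matrix (Fin n) (Fin n) ℂ) (μ : ℂ) (v : Fin n → ℂ) :
    (μ • (1 : Matrix (Fin n) (Fin n) ℂ) - B) *ᵥ v = μ • v - B *ᵥ v := by
  ext i
  simp only [Matrix.mulVec, dotProduct, Matrix.sub_apply, Matrix.smul_apply,
    Matrix.one_apply, smul_eq_mul, Pi.sub_apply, Pi.smul_apply]
  simp only [sub_mul, Finset.sum_sub_distrib]
  congr 1
  simp [ite_mul, mul_comm]

lemma PF_spec_abs_le (M : Matrix (Fin n) (Fin n) ℝ) (hM : ∀ i j, 0 ≤ M i j)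
    (r : ℝ) (p : Fin n → ℝ) (hp : ∀ i, 0 < p i) (heig : p ᵥ* M = r • p)
    (μ : ℂ) (hμ : μ ∈ spectrum ℂ (M.map (Complex.ofReal ·))) : ‖μ‖ ≤ r := by
  classical
  set Mc := M.map (Complex.ofReal ·) with hMc
  rw [PF_mem_spectrum_iff_det] at hμ
  obtain ⟨v, hv0, hv⟩ := (Matrix.exists_mulVec_eq_zero_iff).mpr hμ
  rw [PF_smul_one_sub_mulVec, sub_eq_zero] at hv
  have heigv : ∀ i, μ * v i = ∑ j, (M i j : ℂ) * v j := by
    intro i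
    have := congr_fun hv i
    simpa [Matrix.mulVec, dotProduct, hMc, Matrix.map_apply] using this
  have habs : ∀ i, ‖μ‖ * ‖v i‖ ≤ ∑ j, M i j * ‖v j‖ := by
    intro i
    rw [← norm_mul, heigv i]
    calc ‖∑ j, (M i j : ℂ) * v j‖ ≤ ∑ j, ‖(M i j : ℂ) * v j‖ :=
          norm_sum_le _ _
      _ = ∑ j, M i j * ‖v j‖ := by
          refine Finset.sum_congr rfl fun j _ => ?_
          rw [norm_mul, Complex.norm_real, Real.norm_eq_abs, abs_of_nonneg (hM i j)]
  set s : ℝ := ∑ i, p i * ‖v i‖ with hs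
  have hspos : 0 < s := by
    obtain ⟨i₀, hi₀⟩ := Function.ne_iff.mp hv0
    refine Finset.sum_pos' (fun i _ => mul_nonneg (hp i).le (norm_nonneg _)) ?_
    exact ⟨i₀, Finset.mem_univ _, mul_pos (hp i₀) (by simpa using hi₀)⟩
  have hkey : ‖μ‖ * s ≤ r * s := by
    calc ‖μ‖ * s = ∑ i, p i * (‖μ‖ * ‖v i‖) := by
          rw [hs, Finset.mul_sum]; refine Finset.sum_congr rfl fun i _ => by ring
      _ ≤ ∑ i, p i * (∑ j, M i j * ‖v j‖) :=
          Finset.sum_le_sum fun i _ => mul_le_mul_of_nonneg_left (habs i) (hp i).le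
      _ = ∑ j, (∑ i, p i * M i j) * ‖v j‖ := by
          simp only [Finset.mul_sum, Finset.sum_mul]
          rw [Finset.sum_comm]
          exact Finset.sum_congr rfl fun j _ => Finset.sum_congr rfl fun i _ => by ring
      _ = ∑ j, (r * p j) * ‖v j‖ := by
          refine Finset.sum_congr rfl fun j _ => ?_
          have h1 : (p ᵥ* M) j = r * p j := by rw [heig]; simp
          have h2 : (p ᵥ* M) j = ∑ i, p i * M i j := by
            simp [Matrix.vecMul, dotProduct]
          rw [← h2.symm.trans h1]
      _ = r * s := by rw [hs, Finset.mul_sum]; exact Finset.sum_congr rfl fun j _ => by ring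
  exact le_of_mul_le_mul_right hkey hspos

end spec2


/-- Perron–Frobenius: for an irreducible nonnegative matrix the
spectral radius is positive, is an eigenvalue, and admits a strictly positive
left eigenvector. -/
theorem stmt_0 {n : ℕ} (hn : 1 ≤ n) (M : Matrix (Fin n) (Fin n) ℝ)
    (hM : ∀ i j, 0 ≤ M i j) (hirr : MatIrreducible M) :
    0 < specRad M ∧ specRad M ∈ spectrum ℝ M ∧
      ∃ p : Fin n → ℝ, (∀ i, 0 < p i) ∧ p ᵥ* M = specRad M • p := by
  obtain ⟨r, p, hr, hp, heig⟩ := PF_exists_pos_left_eigenvector hn M hM hirr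
  have i0 : Fin n := ⟨0, hn⟩
  have hpne : p ≠ 0 := fun h => (hp i0).ne' (congr_fun h i0)
  set Mc := M.map (Complex.ofReal ·) with hMc
  have hdetR : (r • (1 : Matrix (Fin n) (Fin n) ℝ) - M).det = 0 := by
    rw [← Matrix.exists_vecMul_eq_zero_iff]
    exact ⟨p, hpne, by rw [PF_vecMul_smul_one_sub, heig, sub_self]⟩
  have hspecR : r ∈ spectrum ℝ M := (PF_mem_spectrum_iff_det M r).mpr hdetR
  have hdetC : ((r : ℂ) • (1 : Matrix (Fin n) (Fin n) ℂ) - Mc).det = 0 := by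
    rw [hMc, ← PF_map_smul_one_sub]
    have h := RingHom.map_det Complex.ofRealHom (r • (1 : Matrix (Fin n) (Fin n) ℝ) - M)
    rw [RingHom.mapMatrix_apply] at h
    rw [show ((r • (1 : Matrix (Fin n) (Fin n) ℝ) - M).map (Complex.ofReal ·)) =
      ((r • (1 : Matrix (Fin n) (Fin n) ℝ) - M).map Complex.ofRealHom) from rfl, ← h, hdetR]
    simp
  have hspecC : (r : ℂ) ∈ spectrum ℂ Mc := (PF_mem_spectrum_iff_det Mc (r : ℂ)).mpr hdetC
  have hgreat : IsGreatest ((‖·‖ : ℂ → ℝ) '' spectrum ℂ Mc) r := by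
    constructor
    · exact ⟨(r : ℂ), hspecC, by show ‖(r : ℂ)‖ = r; rw [Complex.norm_real, Real.norm_eq_abs, abs_of_pos hr]⟩
    · rintro _ ⟨μ, hμ, rfl⟩
      exact PF_spec_abs_le M hM r p hp heig μ hμ
  have hsr : specRad M = r := by
    rw [specRad, ← hMc]
    exact hgreat.csSup_eq
  rw [hsr]
  exact ⟨hr, hspecR, p, hp, heig⟩
end

section
/- (Theorem 4.1: Monotonically increasing profit-rate path.) Let T > 0 and β > 0. Let λ, G, k : ℝ → ℝ satisfy: for every t ∈ [0, T], λ(t) > 0, G(t) < 0, k(t) > 0, and λ has derivative G(t)·(1 - β·k(t)) at t; and k is continuous on [0, T]. Let k_max = sup { k(t) : t ∈ [0, T] } and suppose β·k_max < 1 (i.e., β < β_min = 1/k_max). Define r(t) = 1/λ(t) - 1. Then r is strictly monotonically increasing on [0, T]: for all 0 ≤ s < t ≤ T, r(s) < r(t). -/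
/-- Theorem 4.1, monotonically increasing profit-rate path:
if on `[0, T]` the spectral radius `λ` is positive with derivative
`G(t)·(1 - β·k(t))`, the technology effect satisfies `G < 0`, `k > 0` is
continuous, and `β · k_max < 1` where `k_max = sup k([0, T])`, then the profit
rate `r(t) = 1/λ(t) - 1` is strictly increasing on `[0, T]`. -/
theorem stmt_11 (T β : ℝ) (hT : 0 < T) (hβ : 0 < β) (lam G k : ℝ → ℝ)
    (hdyn : ∀ t ∈ Set.Icc (0 : ℝ) T,
      0 < lam t ∧ G t < 0 ∧ 0 < k t ∧
        HasDerivAt lam (G t * (1 - β * k t)) t)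
    (hk : ContinuousOn k (Set.Icc (0 : ℝ) T))
    (hmax : β * sSup (k '' Set.Icc (0 : ℝ) T) < 1) :
    ∀ s ∈ Set.Icc (0 : ℝ) T, ∀ t ∈ Set.Icc (0 : ℝ) T, s < t →
      1 / lam s - 1 < 1 / lam t - 1 := by
  have hbdd : BddAbove (k '' Set.Icc (0 : ℝ) T) :=
    (isCompact_Icc.image_of_continuousOn hk).bddAbove
  have hkle : ∀ t ∈ Set.Icc (0 : ℝ) T, β * k t < 1 := by
    intro t ht
    have h1 : k t ≤ sSup (k '' Set.Icc (0 : ℝ) T) :=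
      le_csSup hbdd (Set.mem_image_of_mem k ht)
    have := mul_le_mul_of_nonneg_left h1 hβ.le
    linarith
  have hanti : StrictAntiOn lam (Set.Icc (0 : ℝ) T) := by
    apply strictAntiOn_of_deriv_neg (convex_Icc (0:ℝ) T)
    · intro t ht
      exact ((hdyn t ht).2.2.2).continuousAt.continuousWithinAt
    · intro t ht
      rw [interior_Icc] at ht
      have ht' : t ∈ Set.Icc (0 : ℝ) T := Set.mem_Icc_of_Ioo ht
      obtain ⟨_, hG, _, hd⟩ := hdyn t ht'
      rw [hd.deriv]
      have := hkle t ht'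
      exact mul_neg_of_neg_of_pos hG (by linarith)
  intro s hs t ht hst
  have hlt : lam t < lam s := hanti hs ht hst
  have hps := (hdyn s hs).1
  have hpt := (hdyn t ht).1
  have : 1 / lam s < 1 / lam t := one_div_lt_one_div_of_lt hpt hlt
  linarith
end

section
/- (Theorem 4.2: Hump-shaped profit-rate path.) Let T > 0 and β > 0. Let λ, G, k : ℝ → ℝ satisfy: for every t ∈ [0, T], λ(t) > 0, G(t) < 0, k(t) > 0, and λ has derivative G(t)·(1 - β·k(t)) at t; suppose k is continuous and strictly increasing on [0, T], and that β·k(0) < 1 < β·k(T) (i.e., β_min < β < β_max). Define r(t) = 1/λ(t) - 1. Then there exists a unique t_c ∈ (0, T) with β·k(t_c) = 1, and r is strictly increasing on [0, t_c] and strictly decreasing on [t_c, T]. -/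
/-- Theorem 4.2, hump-shaped profit-rate path: if on `[0, T]`
the spectral radius `λ` is positive with derivative `G(t)·(1 - β·k(t))`, the
technology effect satisfies `G < 0`, `k > 0` is continuous and strictly
increasing, and `β·k(0) < 1 < β·k(T)`, then there is a unique turning point
`t_c ∈ (0, T)` with `β·k(t_c) = 1`, and the profit rate `r(t) = 1/λ(t) - 1` is
strictly increasing on `[0, t_c]` and strictly decreasing on `[t_c, T]`. -/
theorem stmt_12 (T β : ℝ) (hT : 0 < T) (hβ : 0 < β) (lam G k : ℝ → ℝ)
    (hdyn : ∀ t ∈ Set.Icc (0 : ℝ) T,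
      0 < lam t ∧ G t < 0 ∧ 0 < k t ∧
        HasDerivAt lam (G t * (1 - β * k t)) t)
    (hkc : ContinuousOn k (Set.Icc (0 : ℝ) T))
    (hkm : StrictMonoOn k (Set.Icc (0 : ℝ) T))
    (h0 : β * k 0 < 1) (hTc : 1 < β * k T) :
    ∃ tc ∈ Set.Ioo (0 : ℝ) T,
      β * k tc = 1 ∧
      (∀ t ∈ Set.Ioo (0 : ℝ) T, β * k t = 1 → t = tc) ∧
      StrictMonoOn (fun t => 1 / lam t - 1) (Set.Icc (0 : ℝ) tc) ∧
      StrictAntiOn (fun t => 1 / lam t - 1) (Set.Icc tc T) := by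
  -- IVT for k
  have hk0 : k 0 < 1 / β := (lt_div_iff₀' hβ).2 h0
  have hkT : 1 / β < k T := (div_lt_iff₀' hβ).2 hTc
  have hivt := intermediate_value_Ioo (le_of_lt hT) hkc
  obtain ⟨tc, htc, hktc⟩ := hivt ⟨hk0, hkT⟩
  have hβk : β * k tc = 1 := by
    rw [hktc]; field_simp [hβ.ne']
  have htcIcc : tc ∈ Set.Icc (0 : ℝ) T := Set.Ioo_subset_Icc_self htc
  refine ⟨tc, htc, hβk, ?_, ?_, ?_⟩
  · intro t ht hkt
    have htI : t ∈ Set.Icc (0 : ℝ) T := Set.Ioo_subset_Icc_self ht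
    rcases lt_trichotomy t tc with h | h | h
    · exfalso; have := hkm htI htcIcc h; nlinarith
    · exact h
    · exfalso; have := hkm htcIcc htI h; nlinarith
  · -- lam strictly decreasing on [0, tc]
    have hsub : Set.Icc (0 : ℝ) tc ⊆ Set.Icc 0 T :=
      Set.Icc_subset_Icc le_rfl htc.2.le
    have hlamc : ContinuousOn lam (Set.Icc (0 : ℝ) tc) := fun x hx =>
      ((hdyn x (hsub hx)).2.2.2.continuousAt).continuousWithinAt
    have hanti : StrictAntiOn lam (Set.Icc (0 : ℝ) tc) := by
      apply strictAntiOn_of_deriv_neg (convex_Icc _ _) hlamc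
      intro x hx
      rw [interior_Icc] at hx
      have hxI : x ∈ Set.Icc (0 : ℝ) T := hsub (Set.Ioo_subset_Icc_self hx)
      obtain ⟨_, hG, _, hd⟩ := hdyn x hxI
      rw [hd.deriv]
      have hkx : k x < k tc := hkm hxI htcIcc hx.2
      have h1 : β * k x < 1 := by nlinarith
      exact mul_neg_of_neg_of_pos hG (by linarith)
    intro x hx y hy hxy
    have hlx := (hdyn x (hsub hx)).1
    have hly := (hdyn y (hsub hy)).1
    have : lam y < lam x := hanti hx hy hxy
    have : 1 / lam x < 1 / lam y := one_div_lt_one_div_of_lt hly this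
    linarith
  · -- lam strictly increasing on [tc, T]
    have hsub : Set.Icc tc T ⊆ Set.Icc (0 : ℝ) T :=
      Set.Icc_subset_Icc htc.1.le le_rfl
    have hlamc : ContinuousOn lam (Set.Icc tc T) := fun x hx =>
      ((hdyn x (hsub hx)).2.2.2.continuousAt).continuousWithinAt
    have hmono : StrictMonoOn lam (Set.Icc tc T) := by
      apply strictMonoOn_of_deriv_pos (convex_Icc _ _) hlamc
      intro x hx
      rw [interior_Icc] at hx
      have hxI : x ∈ Set.Icc (0 : ℝ) T := hsub (Set.Ioo_subset_Icc_self hx)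
      obtain ⟨_, hG, _, hd⟩ := hdyn x hxI
      rw [hd.deriv]
      have hkx : k tc < k x := hkm htcIcc hxI hx.1
      have h1 : 1 < β * k x := by nlinarith
      exact mul_pos_of_neg_of_neg hG (by linarith)
    intro x hx y hy hxy
    have hlx := (hdyn x (hsub hx)).1
    have hly := (hdyn y (hsub hy)).1
    have : lam x < lam y := hmono hx hy hxy
    have : 1 / lam y < 1 / lam x := one_div_lt_one_div_of_lt hlx this
    linarith
end

section
/- (Theorem 4.3: Monotonically decreasing profit-rate path.) Let T > 0 and β > 0. Let λ, G, k : ℝ → ℝ satisfy: for every t ∈ [0, T], λ(t) > 0, G(t) < 0, k(t) > 0, and λ has derivative G(t)·(1 - β·k(t)) at t; and k is continuous on [0, T]. Let k_min = inf { k(t) : t ∈ [0, T] } and suppose β·k_min > 1 (i.e., β > β_max = 1/k_min). Define r(t) = 1/λ(t) - 1. Then r is strictly monotonically decreasing on [0, T]: for all 0 ≤ s < t ≤ T, r(s) > r(t). -/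
/-- Theorem 4.3, monotonically decreasing profit-rate path:
if on `[0, T]` the spectral radius `λ` is positive with derivative
`G(t)·(1 - β·k(t))`, the technology effect satisfies `G < 0`, `k > 0` is
continuous, and `β · k_min > 1` where `k_min = inf k([0, T])`, then the profit
rate `r(t) = 1/λ(t) - 1` is strictly decreasing on `[0, T]`. -/
theorem stmt_13 (T β : ℝ) (hT : 0 < T) (hβ : 0 < β) (lam G k : ℝ → ℝ)
    (hdyn : ∀ t ∈ Set.Icc (0 : ℝ) T,
      0 < lam t ∧ G t < 0 ∧ 0 < k t ∧
        HasDerivAt lam (G t * (1 - β * k t)) t)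
    (hk : ContinuousOn k (Set.Icc (0 : ℝ) T))
    (hmin : 1 < β * sInf (k '' Set.Icc (0 : ℝ) T)) :
    ∀ s ∈ Set.Icc (0 : ℝ) T, ∀ t ∈ Set.Icc (0 : ℝ) T, s < t →
      1 / lam t - 1 < 1 / lam s - 1 := by
  -- image is bounded below (compact image)
  have hcpt : IsCompact (k '' Set.Icc (0 : ℝ) T) :=
    (isCompact_Icc).image_of_continuousOn hk
  have hbdd : BddBelow (k '' Set.Icc (0 : ℝ) T) := hcpt.bddBelow
  have hβk : ∀ t ∈ Set.Icc (0 : ℝ) T, 1 < β * k t := by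
    intro t ht
    have : sInf (k '' Set.Icc (0 : ℝ) T) ≤ k t :=
      csInf_le hbdd ⟨t, ht, rfl⟩
    calc 1 < β * sInf (k '' Set.Icc (0 : ℝ) T) := hmin
      _ ≤ β * k t := by nlinarith
  -- lam strictly increasing on Icc
  have hmono : StrictMonoOn lam (Set.Icc (0 : ℝ) T) := by
    apply strictMonoOn_of_deriv_pos (convex_Icc 0 T)
    · intro t ht
      exact ((hdyn t ht).2.2.2).continuousAt.continuousWithinAt
    · intro t ht
      rw [interior_Icc] at ht
      have ht' : t ∈ Set.Icc (0 : ℝ) T := ⟨le_of_lt ht.1, le_of_lt ht.2⟩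
      obtain ⟨_, hG, _, hderiv⟩ := hdyn t ht'
      rw [hderiv.deriv]
      have := hβk t ht'
      nlinarith
  intro s hs t ht hst
  have h1 := (hdyn s hs).1
  have h2 := (hdyn t ht).1
  have hlt : lam s < lam t := hmono hs ht hst
  have : 1 / lam t < 1 / lam s := one_div_lt_one_div_of_lt h1 hlt
  linarith
end
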